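/- Let $q \in \mathbb{C}^\times$ not be a root of unity, and let $\sigma$ be a $\mathbb{C}$-algebra automorphism of the quantum torus $A_q$. Then there exist $\alpha, \beta \in \mathbb{C}^\times$ and a matrix $\begin{pmatrix} a & b \\ c & d \end{pmatrix} \in \mathrm{SL}_2(\mathbb{Z})$ (i.e. $ad - bc = 1$) such that $\sigma(x) = \alpha\, y^b x^a$ and $\sigma(y) = \beta\, y^d x^c$. -/

import Mathlib

/-- The quantum torus `A_q = ℂ⟨x^{±1}, y^{±1}⟩/(xy - q·yx)`, presented abstractly:
a ℂ-algebra with two units `x`, `y` satisfying `x*y = q • (y*x)` such that the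
monomials `x^a y^b` (for `(a,b) ∈ ℤ²`) form a ℂ-basis. -/
structure QuantumTorus (q : ℂˣ) (A : Type*) [Ring A] [Algebra ℂ A] where
  x : Aˣ
  y : Aˣ
  rel : (x : A) * (y : A) = (q : ℂ) • ((y : A) * (x : A))
  basis : Module.Basis (ℤ × ℤ) ℂ A
  basis_eq : ∀ ab : ℤ × ℤ, basis ab = ((x ^ ab.1 * y ^ ab.2 : Aˣ) : A)

/-- `q` is not a root of unity. -/
def NotRootOfUnity (q : ℂˣ) : Prop := ∀ n : ℕ, 0 < n → q ^ n ≠ 1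

namespace QTAux

variable {q : ℂˣ} {A : Type*} [Ring A] [Algebra ℂ A]

noncomputable def QU (q : ℂˣ) (A : Type*) [Ring A] [Algebra ℂ A] : Aˣ :=
  Units.map (algebraMap ℂ A : ℂ →* A) q

lemma QU_zpow_val (k : ℤ) : ((QU q A ^ k : Aˣ) : A) = algebraMap ℂ A ((q ^ k : ℂˣ) : ℂ) := by
  have : QU q A ^ k = Units.map (algebraMap ℂ A : ℂ →* A) (q ^ k) :=
    (map_zpow (Units.map (algebraMap ℂ A : ℂ →* A)) q k).symm
  rw [this]; rfl

lemma QU_commute (u : Aˣ) : Commute (QU q A) u :=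
  Units.ext (Algebra.commutes (q : ℂ) (u : A))

variable (T : QuantumTorus q A)

lemma relU : T.x * T.y = QU q A * (T.y * T.x) := by
  apply Units.ext
  show (T.x : A) * T.y = algebraMap ℂ A q * ((T.y : A) * T.x)
  rw [T.rel, Algebra.smul_def]

lemma semi_x_y : SemiconjBy T.x T.y (QU q A * T.y) := by
  show T.x * T.y = QU q A * T.y * T.x
  rw [relU T, mul_assoc]

lemma x_zpow_y (m : ℤ) : T.x * T.y ^ m = QU q A ^ m * T.y ^ m * T.x := by
  have h := (semi_x_y T).zpow_right m
  rw [SemiconjBy] at h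
  rw [h, (QU_commute T.y).mul_zpow m]

lemma y_zpow_semi (m : ℤ) : SemiconjBy (T.y ^ m) T.x (QU q A ^ (-m) * T.x) := by
  show T.y ^ m * T.x = QU q A ^ (-m) * T.x * T.y ^ m
  have h := x_zpow_y T m
  rw [zpow_neg, mul_assoc, h, mul_assoc (QU q A ^ m), inv_mul_cancel_left]

lemma yx (m n : ℤ) : T.y ^ m * T.x ^ n = QU q A ^ (-(m * n)) * (T.x ^ n * T.y ^ m) := by
  have h := (y_zpow_semi T m).zpow_right n
  rw [SemiconjBy] at h
  rw [h, ((QU_commute T.x).zpow_left (-m)).mul_zpow n, ← zpow_mul, mul_assoc]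
  congr 1
  ring_nf


noncomputable def e (T : QuantumTorus q A) (p : ℤ × ℤ) : A :=
  ((T.x ^ p.1 * T.y ^ p.2 : Aˣ) : A)

lemma repr_e (p : ℤ × ℤ) : T.basis.repr (e T p) = Finsupp.single p 1 := by
  rw [show e T p = T.basis p from (T.basis_eq p).symm, Module.Basis.repr_self]

lemma e_zero : e T (0, 0) = 1 := by simp [e]

noncomputable def w (q : ℂˣ) (s t : ℤ × ℤ) : ℂ := ((q ^ (-(s.2 * t.1)) : ℂˣ) : ℂ)

lemma w_ne (s t : ℤ × ℤ) : w q s t ≠ 0 := Units.ne_zero _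

lemma e_mul (s t : ℤ × ℤ) : e T s * e T t = w q s t • e T (s + t) := by
  have hu : (T.x ^ s.1 * T.y ^ s.2) * (T.x ^ t.1 * T.y ^ t.2)
      = QU q A ^ (-(s.2 * t.1)) * (T.x ^ (s.1 + t.1) * T.y ^ (s.2 + t.2)) := by
    have h := yx T s.2 t.1
    have hcomm : QU q A ^ (-(s.2 * t.1)) * T.x ^ s.1 = T.x ^ s.1 * QU q A ^ (-(s.2 * t.1)) :=
      ((QU_commute (T.x ^ s.1)).zpow_left (-(s.2 * t.1))).eq
    rw [zpow_add, zpow_add,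
      show T.x ^ s.1 * T.y ^ s.2 * (T.x ^ t.1 * T.y ^ t.2)
          = T.x ^ s.1 * (T.y ^ s.2 * T.x ^ t.1) * T.y ^ t.2 from by group,
      h, ← mul_assoc (T.x ^ s.1), ← hcomm]
    group
  show ((T.x ^ s.1 * T.y ^ s.2 : Aˣ) : A) * ((T.x ^ t.1 * T.y ^ t.2 : Aˣ) : A) = _
  rw [← Units.val_mul, hu, Units.val_mul, QU_zpow_val, ← Algebra.smul_def]
  rfl

lemma eq_sum_repr (u : A) :
    u = ∑ s ∈ (T.basis.repr u).support, (T.basis.repr u) s • e T s := by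
  conv_lhs => rw [← T.basis.linearCombination_repr u]
  rw [Finsupp.linearCombination_apply, Finsupp.sum]
  exact Finset.sum_congr rfl fun s _ => by rw [T.basis_eq s]; rfl

lemma pair_eq {G : Type*} [AddCommGroup G] [LinearOrder G] [IsOrderedAddMonoid G] {s sM t tM : G}
    (h1 : s ≤ sM) (h2 : t ≤ tM) (h : s + t = sM + tM) : s = sM ∧ t = tM := by
  constructor
  · by_contra hne
    exact absurd h (ne_of_lt (add_lt_add_of_lt_of_le (h1.lt_of_ne hne) h2))
  · by_contra hne
    exact absurd h (ne_of_lt (add_lt_add_of_le_of_lt h1 (h2.lt_of_ne hne)))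

lemma coeff_at (f g : (ℤ × ℤ) →₀ ℂ) {s₀ t₀ : ℤ × ℤ} (hs₀ : s₀ ∈ f.support)
    (ht₀ : t₀ ∈ g.support)
    (huniq : ∀ s ∈ f.support, ∀ t ∈ g.support, s + t = s₀ + t₀ → s = s₀ ∧ t = t₀) :
    T.basis.repr ((∑ s ∈ f.support, f s • e T s) * (∑ t ∈ g.support, g t • e T t)) (s₀ + t₀)
      = f s₀ * g t₀ * w q s₀ t₀ := by
  rw [Finset.sum_mul_sum]
  have hterm : ∀ s t : ℤ × ℤ,
      (f s • e T s) * (g t • e T t) = (f s * g t * w q s t) • e T (s + t) := by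
    intro s t
    rw [smul_mul_assoc, Algebra.mul_smul_comm, e_mul T, smul_smul, smul_smul, mul_assoc]
  simp only [hterm, map_sum, map_smul, repr_e, Finset.sum_apply', Finsupp.smul_apply,
    Finsupp.single_apply, smul_eq_mul]
  rw [Finset.sum_eq_single_of_mem s₀ hs₀]
  · rw [Finset.sum_eq_single_of_mem t₀ ht₀]
    · simp
    · intro t ht hne
      have hne' : s₀ + t ≠ s₀ + t₀ := fun hh => hne (huniq s₀ hs₀ t ht hh).2
      simp [hne']
  · intro s hs hne
    apply Finset.sum_eq_zero
    intro t ht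
    have hne' : s + t ≠ s₀ + t₀ := fun hh => hne (huniq s hs t ht hh).1
    simp [hne']
lemma unit_monomial (u : Aˣ) :
    ∃ (c : ℂ) (p : ℤ × ℤ), c ≠ 0 ∧ (u : A) = c • e T p := by
  haveI : Nontrivial A := nontrivial_of_ne _ _ (T.basis.ne_zero (0, 0))
  set f := T.basis.repr (u : A) with hf
  set g := T.basis.repr ((u⁻¹ : Aˣ) : A) with hg
  have hfne : f ≠ 0 := fun h =>
    u.ne_zero (T.basis.repr.injective (by rw [← hf, h, map_zero]))
  have hgne : g ≠ 0 := fun h =>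
    u⁻¹.ne_zero (T.basis.repr.injective (by rw [← hg, h, map_zero]))
  have hSf : f.support.Nonempty := Finsupp.support_nonempty_iff.2 hfne
  have hSg : g.support.Nonempty := Finsupp.support_nonempty_iff.2 hgne
  obtain ⟨sM, hsM, hsMmax⟩ := Finset.exists_max_image f.support (toLex : ℤ × ℤ → Lex (ℤ × ℤ)) hSf
  obtain ⟨sm, hsm, hsmmin⟩ := Finset.exists_min_image f.support (toLex : ℤ × ℤ → Lex (ℤ × ℤ)) hSf
  obtain ⟨tM, htM, htMmax⟩ := Finset.exists_max_image g.support (toLex : ℤ × ℤ → Lex (ℤ × ℤ)) hSg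
  obtain ⟨tm, htm, htmmin⟩ := Finset.exists_min_image g.support (toLex : ℤ × ℤ → Lex (ℤ × ℤ)) hSg
  have hu : (u : A) = ∑ s ∈ f.support, f s • e T s := by
    conv_lhs => rw [eq_sum_repr T (u : A)]
  have huinv : ((u⁻¹ : Aˣ) : A) = ∑ t ∈ g.support, g t • e T t := by
    conv_lhs => rw [eq_sum_repr T ((u⁻¹ : Aˣ) : A)]
  have h1 : T.basis.repr (1 : A) = Finsupp.single ((0, 0) : ℤ × ℤ) 1 := by
    rw [← e_zero T, repr_e]
  have hprod : (u : A) * ((u⁻¹ : Aˣ) : A) = 1 := u.mul_inv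
  have toLex_add : ∀ a b : ℤ × ℤ, toLex (a + b) = toLex a + toLex b := fun _ _ => rfl
  -- the coefficient at sM + tM
  have hMax : Finsupp.single ((0, 0) : ℤ × ℤ) (1 : ℂ) (sM + tM) = f sM * g tM * w q sM tM := by
    rw [← h1, ← hprod, hu, huinv]
    exact coeff_at T f g hsM htM (fun s hs t ht hsum => by
      have := pair_eq (hsMmax s hs) (htMmax t ht)
        (by rw [← toLex_add, ← toLex_add, hsum])
      exact ⟨toLex.injective this.1, toLex.injective this.2⟩)
  have hMin : Finsupp.single ((0, 0) : ℤ × ℤ) (1 : ℂ) (sm + tm) = f sm * g tm * w q sm tm := by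
    rw [← h1, ← hprod, hu, huinv]
    exact coeff_at T f g hsm htm (fun s hs t ht hsum => by
      have := pair_eq (hsmmin s hs) (htmmin t ht)
        (by rw [← toLex_add, ← toLex_add, hsum])
      exact ⟨(toLex.injective this.1).symm, (toLex.injective this.2).symm⟩)
  have hfsM : f sM ≠ 0 := Finsupp.mem_support_iff.1 hsM
  have hgtM : g tM ≠ 0 := Finsupp.mem_support_iff.1 htM
  have hfsm : f sm ≠ 0 := Finsupp.mem_support_iff.1 hsm
  have hgtm : g tm ≠ 0 := Finsupp.mem_support_iff.1 htm
  have hM0 : sM + tM = (0, 0) := by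
    by_contra hne
    rw [Finsupp.single_apply, if_neg (fun hh => hne hh.symm)] at hMax
    exact (mul_ne_zero (mul_ne_zero hfsM hgtM) (w_ne sM tM)) hMax.symm
  have hm0 : sm + tm = (0, 0) := by
    by_contra hne
    rw [Finsupp.single_apply, if_neg (fun hh => hne hh.symm)] at hMin
    exact (mul_ne_zero (mul_ne_zero hfsm hgtm) (w_ne sm tm)) hMin.symm
  have hsums : toLex sm + toLex tm = toLex sM + toLex tM := by
    rw [← toLex_add, ← toLex_add, hM0, hm0]
  have heq := pair_eq (hsmmin sM hsM)
    (htmmin tM htM) hsums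
  have hsupp : f.support = {sM} := by
    apply Finset.eq_singleton_iff_unique_mem.2
    refine ⟨hsM, fun s hs => toLex.injective (le_antisymm (hsMmax s hs) ?_)⟩
    calc toLex sM = toLex sm := heq.1.symm
      _ ≤ toLex s := hsmmin s hs
  refine ⟨f sM, sM, hfsM, ?_⟩
  rw [hu, hsupp, Finset.sum_singleton]
lemma zpow_eq_one_iff (hq : NotRootOfUnity q) {m : ℤ} (h : q ^ m = 1) : m = 0 := by
  rcases lt_trichotomy m 0 with hm | hm | hm
  · exfalso
    apply hq (-m).toNat (by omega)
    rw [← zpow_natCast, Int.toNat_of_nonneg (by omega), zpow_neg, h, inv_one]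
  · exact hm
  · exfalso
    apply hq m.toNat (by omega)
    rw [← zpow_natCast, Int.toNat_of_nonneg (by omega), h]

lemma smul_e_cancel {c₁ c₂ : ℂ} {p : ℤ × ℤ} (h : c₁ • e T p = c₂ • e T p) : c₁ = c₂ := by
  have := congrArg (fun z => T.basis.repr z p) h
  simpa [repr_e, Finsupp.single_apply] using this

theorem main (hq : NotRootOfUnity q) (σ : A ≃ₐ[ℂ] A) :
    ∃ (α β : ℂˣ) (a b c d : ℤ), a * d - b * c = 1 ∧
      σ (T.x : A) = (α : ℂ) • ((T.y ^ b * T.x ^ a : Aˣ) : A) ∧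
      σ (T.y : A) = (β : ℂ) • ((T.y ^ d * T.x ^ c : Aˣ) : A) := by
  have hux : IsUnit (σ (T.x : A)) := T.x.isUnit.map σ
  have huy : IsUnit (σ (T.y : A)) := T.y.isUnit.map σ
  obtain ⟨γ, p1, hγ, hx⟩ := unit_monomial T hux.unit
  obtain ⟨δ, p2, hδ, hy⟩ := unit_monomial T huy.unit
  rw [hux.unit_spec] at hx
  rw [huy.unit_spec] at hy
  obtain ⟨a, b⟩ := p1
  obtain ⟨c, d⟩ := p2
  -- apply σ to the relation
  have hrel : σ ((T.x : A) * T.y) = σ ((q : ℂ) • ((T.y : A) * T.x)) := congrArg σ T.rel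
  rw [map_mul, map_smul, map_mul, hx, hy] at hrel
  have hL : (γ • e T (a, b)) * (δ • e T (c, d)) = (γ * δ * w q (a, b) (c, d)) • e T ((a, b) + (c, d)) := by
    rw [smul_mul_assoc, Algebra.mul_smul_comm, e_mul T, smul_smul, smul_smul, mul_assoc]
  have hR : (δ • e T (c, d)) * (γ • e T (a, b)) = (δ * γ * w q (c, d) (a, b)) • e T ((a, b) + (c, d)) := by
    rw [smul_mul_assoc, Algebra.mul_smul_comm, e_mul T, smul_smul, smul_smul, mul_assoc,
      show ((c, d) : ℤ × ℤ) + (a, b) = (a, b) + (c, d) from by ring]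
  rw [hL, hR, smul_smul] at hrel
  have hcoef : γ * δ * w q (a, b) (c, d) = (q : ℂ) * (δ * γ * w q (c, d) (a, b)) :=
    smul_e_cancel T hrel
  -- extract the determinant condition
  have hw : w q (a, b) (c, d) = (q : ℂ) * w q (c, d) (a, b) := by
    have hγδ : γ * δ ≠ 0 := mul_ne_zero hγ hδ
    apply mul_left_cancel₀ hγδ
    rw [hcoef]; ring
  have hunits : (q : ℂˣ) ^ (-(b * c)) = q * q ^ (-(d * a)) := by
    apply Units.ext
    simpa [w, Units.val_mul] using hw
  have hdet : a * d - b * c = 1 := by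
    have h2 : q * q ^ (-(d * a)) = q ^ (1 - d * a) := by
      rw [zpow_sub, zpow_one, zpow_neg]
    have h1 : q ^ (-(b * c) - (1 - d * a)) = 1 := by
      rw [zpow_sub, hunits, h2]
      simp
    have h3 := zpow_eq_one_iff hq h1
    have h4 : a * d = d * a := mul_comm a d
    linarith
  -- convert x^a y^b into y^b x^a form
  have hconv : ∀ (a b : ℤ), e T (a, b) = ((q ^ (b * a) : ℂˣ) : ℂ) • ((T.y ^ b * T.x ^ a : Aˣ) : A) := by
    intro a b
    have hu : (T.x ^ a * T.y ^ b : Aˣ) = QU q A ^ (b * a) * (T.y ^ b * T.x ^ a) := by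
      rw [yx T b a, ← mul_assoc, ← zpow_add, add_neg_cancel, zpow_zero, one_mul]
    show ((T.x ^ a * T.y ^ b : Aˣ) : A) = _
    rw [hu, Units.val_mul, QU_zpow_val, ← Algebra.smul_def]
  refine ⟨Units.mk0 γ hγ * q ^ (b * a), Units.mk0 δ hδ * q ^ (d * c), a, b, c, d, hdet, ?_, ?_⟩
  · rw [hx, hconv a b, smul_smul, Units.val_mul]; rfl
  · rw [hy, hconv c d, smul_smul, Units.val_mul]; rfl
end QTAux


theorem stmt_13 (q : ℂˣ) (hq : NotRootOfUnity q) (A : Type*) [Ring A] [Algebra ℂ A]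
    (T : QuantumTorus q A) (σ : A ≃ₐ[ℂ] A) :
    ∃ (α β : ℂˣ) (a b c d : ℤ), a * d - b * c = 1 ∧
      σ (T.x : A) = (α : ℂ) • ((T.y ^ b * T.x ^ a : Aˣ) : A) ∧
      σ (T.y : A) = (β : ℂ) • ((T.y ^ d * T.x ^ c : Aˣ) : A) :=
  QTAux.main T hq σ
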